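/- For every nonnegative integer n, C_n * C_{n+1} = \sum_{k=0}^{n} (2k+1)(2k+2)(2k+3) / ((2n+1)(2n+2)(2n+3)^2) * binom(2n+3, n-k) * binom(2n+3, n-k+1). -/

import Mathlib

noncomputable def auxF (n j : ℕ) : ℚ :=
  (2 * (j : ℚ) ^ 4 + (2 * (n : ℚ) ^ 2 + 3 * (n : ℚ) - 1) * (j : ℚ) ^ 2 +
      ((n : ℚ) + 1) * ((2 * (n : ℚ) + 5) * (j : ℚ) - 4 * (j : ℚ) ^ 3)) *
    ((2 * n + 3).choose j : ℚ) * ((2 * n + 3).choose (j + 1) : ℚ) /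
    (((n : ℚ) + 1) * ((2 * (n : ℚ) + 1) * (2 * (n : ℚ) + 2) * (2 * (n : ℚ) + 3) ^ 2))

lemma aux_choose (n j : ℕ) :
    ((2 * n + 3).choose (j + 1) : ℚ) =
      ((2 * n + 3).choose j : ℚ) * (2 * (n : ℚ) + 3 - (j : ℚ)) / ((j : ℚ) + 1) := by
  rcases le_or_gt j (2 * n + 3) with h | h
  · have h1 := Nat.choose_succ_right_eq (2 * n + 3) j
    have h2 : (((2 * n + 3).choose (j + 1) * (j + 1) : ℕ) : ℚ) =
        (((2 * n + 3).choose j * (2 * n + 3 - j) : ℕ) : ℚ) := congrArg (fun m : ℕ => (m : ℚ)) h1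
    push_cast [Nat.cast_sub h] at h2
    have hj : ((j : ℚ) + 1) ≠ 0 := by positivity
    field_simp
    linear_combination h2
  · rw [Nat.choose_eq_zero_of_lt (by omega), Nat.choose_eq_zero_of_lt (by omega)]
    simp

lemma aux_step (n j : ℕ) (_hj : j ≤ n) :
    ((2 * ((n : ℚ) - j) + 1) * (2 * ((n : ℚ) - j) + 2) * (2 * ((n : ℚ) - j) + 3)) /
        ((2 * n + 1 : ℚ) * (2 * n + 2) * (2 * n + 3) ^ 2) *
      ((2 * n + 3).choose j : ℚ) * ((2 * n + 3).choose (j + 1) : ℚ) =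
      auxF n (j + 1) - auxF n j := by
  simp only [auxF]
  rw [aux_choose n (j + 1), aux_choose n j]
  have h1 : ((j : ℚ) + 1) ≠ 0 := by positivity
  have h2 : ((j : ℚ) + 1 + 1) ≠ 0 := by positivity
  have h3 : ((n : ℚ) + 1) ≠ 0 := by positivity
  have h4 : (2 * (n : ℚ) + 1) ≠ 0 := by positivity
  have h5 : (2 * (n : ℚ) + 2) ≠ 0 := by positivity
  have h6 : (2 * (n : ℚ) + 3) ≠ 0 := by positivity
  push_cast
  field_simp
  ring

theorem stmt_2 (n : ℕ) :
    (catalan n : ℚ) * catalan (n + 1) =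
      ∑ k ∈ Finset.range (n + 1),
        ((2 * k + 1 : ℚ) * (2 * k + 2) * (2 * k + 3)) /
            ((2 * n + 1 : ℚ) * (2 * n + 2) * (2 * n + 3) ^ 2) *
          ((2 * n + 3).choose (n - k)) * ((2 * n + 3).choose (n - k + 1)) := by
  rw [← Finset.sum_range_reflect]
  have hsum : ∀ j ∈ Finset.range (n + 1),
      ((2 * ((n + 1 - 1 - j : ℕ) : ℚ) + 1) * (2 * ((n + 1 - 1 - j : ℕ) : ℚ) + 2) *
          (2 * ((n + 1 - 1 - j : ℕ) : ℚ) + 3)) /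
          ((2 * n + 1 : ℚ) * (2 * n + 2) * (2 * n + 3) ^ 2) *
        ((2 * n + 3).choose (n - (n + 1 - 1 - j)) : ℚ) *
        ((2 * n + 3).choose (n - (n + 1 - 1 - j) + 1) : ℚ) = auxF n (j + 1) - auxF n j := by
    intro j hj
    rw [Finset.mem_range] at hj
    have hj' : j ≤ n := by omega
    have e1 : n + 1 - 1 - j = n - j := by omega
    have e2 : n - (n - j) = j := by omega
    rw [e1, e2, Nat.cast_sub hj']
    exact aux_step n j hj'
  rw [Finset.sum_congr rfl hsum, Finset.sum_range_sub]
  have hF0 : auxF n 0 = 0 := by simp [auxF]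
  rw [hF0, sub_zero]
  -- now compute auxF n (n+1)
  have hsymm : ((2 * n + 3).choose (n + 1) : ℚ) = ((2 * n + 3).choose (n + 2) : ℚ) := by
    rw [show (n + 1) = (2 * n + 3) - (n + 2) by omega, Nat.choose_symm (by omega)]
  have hx1 : ((n : ℚ) + 1) * catalan n = Nat.centralBinom n := by
    exact_mod_cast congrArg (Nat.cast : ℕ → ℚ) (succ_mul_catalan_eq_centralBinom n)
  have hx2 : ((n : ℚ) + 2) * catalan (n + 1) = Nat.centralBinom (n + 1) := by
    have := congrArg (Nat.cast : ℕ → ℚ) (succ_mul_catalan_eq_centralBinom (n + 1))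
    push_cast at this
    linear_combination this
  have hy : ((n : ℚ) + 1) * Nat.centralBinom (n + 1) = 2 * (2 * n + 1) * Nat.centralBinom n := by
    have := congrArg (Nat.cast : ℕ → ℚ) (Nat.succ_mul_centralBinom_succ n)
    push_cast at this
    linear_combination this
  have hz : ((n : ℚ) + 2) * ((2 * n + 3).choose (n + 2)) =
      (2 * (n : ℚ) + 3) * Nat.centralBinom (n + 1) := by
    have h := Nat.add_one_mul_choose_eq (2 * n + 2) (n + 1)
    have := congrArg (Nat.cast : ℕ → ℚ) h
    push_cast [Nat.centralBinom] at this ⊢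
    rw [show 2 * (n + 1) = 2 * n + 2 by ring]
    linear_combination -this
  have h3 : ((n : ℚ) + 1) ≠ 0 := by positivity
  have h3' : ((n : ℚ) + 2) ≠ 0 := by positivity
  have h7 : ((n : ℚ) + 2) * catalan (n + 1) = 2 * (2 * n + 1) * catalan n := by
    apply mul_left_cancel₀ h3
    linear_combination ((n : ℚ) + 1) * hx2 + hy - 2 * (2 * (n : ℚ) + 1) * hx1
  have hc2 : ((2 * n + 3).choose (n + 2) : ℚ) = (2 * (n : ℚ) + 3) * catalan (n + 1) := by
    apply mul_left_cancel₀ h3'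
    linear_combination hz - (2 * (n : ℚ) + 3) * hx2
  simp only [auxF]
  rw [show n + 1 + 1 = n + 2 from rfl, hsymm, hc2]
  have h4 : (2 * (n : ℚ) + 1) ≠ 0 := by positivity
  have h5 : (2 * (n : ℚ) + 2) ≠ 0 := by positivity
  have h6 : (2 * (n : ℚ) + 3) ≠ 0 := by positivity
  push_cast
  field_simp
  linear_combination (-(catalan (n + 1) : ℚ)) * h7
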